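/- arXiv:1806.09620 — 4 statements merged into one kernel-verified Lean document; each statement's English description precedes it below -/
import Mathlib

section
/- Under the same assumptions, x* ∈ X is a local minimizer of F if and only if (x*, g(x*)) is a local minimizer of φ over Ω. -/
theorem local_minimizer_equivalence
    (m : ℕ) (ni : Fin m → ℕ)
    (X : Set (∀ i, EuclideanSpace ℝ (Fin (ni i))))
    (hXclosed : IsClosed X) (hXconv : Convex ℝ X)
    (f : (∀ i, EuclideanSpace ℝ (Fin (ni i))) → ℝ)
    (g : ∀ i, EuclideanSpace ℝ (Fin (ni i)) → ℝ)
    (hgcont : ∀ i, Continuous (g i))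
    (hgconv : ∀ i, ConvexOn ℝ Set.univ (g i))
    (h : Fin m → ℝ → ℝ)
    (hmono : ∀ i, Monotone (h i))
    (hcont : ∀ i, Continuous (h i))
    (F : (∀ i, EuclideanSpace ℝ (Fin (ni i))) → ℝ)
    (hF : F = fun x => f x + ∑ i, h i (g i (x i)))
    (φ : ((∀ i, EuclideanSpace ℝ (Fin (ni i))) × (Fin m → ℝ)) → ℝ)
    (hφ : φ = fun p => f p.1 + ∑ i, h i (p.2 i))
    (Ω : Set ((∀ i, EuclideanSpace ℝ (Fin (ni i))) × (Fin m → ℝ)))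
    (hΩ : Ω = {p | p.1 ∈ X ∧ ∀ i, g i (p.1 i) ≤ p.2 i})
    (xstar : ∀ i, EuclideanSpace ℝ (Fin (ni i)))
    (hxstar : xstar ∈ X) :
    IsLocalMinOn F X xstar ↔
      IsLocalMinOn φ Ω (xstar, fun i => g i (xstar i)) := by
  subst hF hφ hΩ
  constructor
  · intro hloc
    have hmap : Filter.Tendsto Prod.fst
        (nhdsWithin (xstar, fun i => g i (xstar i))
          {p : ((∀ i, EuclideanSpace ℝ (Fin (ni i))) × (Fin m → ℝ)) |
            p.1 ∈ X ∧ ∀ i, g i (p.1 i) ≤ p.2 i})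
        (nhdsWithin xstar X) := by
      apply tendsto_nhdsWithin_of_tendsto_nhds_of_eventually_within
      · exact continuous_fst.continuousAt.mono_left nhdsWithin_le_nhds
      · exact eventually_nhdsWithin_of_forall fun p hp => hp.1
    have h2 := hmap.eventually hloc
    refine (h2.and (eventually_mem_nhdsWithin)).mono ?_
    rintro ⟨x, z⟩ ⟨hFle, hx, hz⟩
    simp only at hFle ⊢
    calc f xstar + ∑ i, h i (g i (xstar i)) ≤ f x + ∑ i, h i (g i (x i)) := hFle
    _ ≤ f x + ∑ i, h i (z i) := by
        gcongr with i
        exact hmono i (hz i)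
  · intro hloc
    have hmap : Filter.Tendsto (fun x => (x, fun i => g i (x i)))
        (nhdsWithin xstar X)
        (nhdsWithin (xstar, fun i => g i (xstar i))
          {p : ((∀ i, EuclideanSpace ℝ (Fin (ni i))) × (Fin m → ℝ)) |
            p.1 ∈ X ∧ ∀ i, g i (p.1 i) ≤ p.2 i}) := by
      apply tendsto_nhdsWithin_of_tendsto_nhds_of_eventually_within
      · exact (continuous_id.prodMk
          (continuous_pi fun i => (hgcont i).comp (continuous_apply i))).continuousAt.mono_left
          nhdsWithin_le_nhds
      · exact eventually_mem_nhdsWithin.mono fun x hx => ⟨hx, fun i => le_refl _⟩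
    exact hmap.eventually hloc
end

section
/- Suppose at iteration k of DCA-Like the backtracking condition H_{μ_k}(x^{k+1}, g(x^{k+1})) ≥ H_{μ_k}(x^k, g(x^k)) + ⟨μ_k x^k − ∇f(x^k), x^{k+1} − x^k⟩ + ⟨ξ^k, g(x^{k+1}) − g(x^k)⟩ holds and x^{k+1} minimizes G_{μ_k}(x,z) − ⟨y^k, x⟩ − ⟨ξ^k, z⟩ over Ω. Then φ(x^k, g(x^k)) − φ(x^{k+1}, g(x^{k+1})) ≥ (μ_k/2)‖x^{k+1} − x^k‖². -/
open Real

theorem dca_like_sufficient_decrease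
    (m : ℕ) (ni : Fin m → ℕ)
    (X : Set (PiLp 2 fun i : Fin m => EuclideanSpace ℝ (Fin (ni i))))
    (hXconv : Convex ℝ X)
    (f : (PiLp 2 fun i : Fin m => EuclideanSpace ℝ (Fin (ni i))) → ℝ)
    (hf : Differentiable ℝ f)
    (g : ∀ i, EuclideanSpace ℝ (Fin (ni i)) → ℝ)
    (hgconv : ∀ i, ConvexOn ℝ Set.univ (g i))
    (h : Fin m → ℝ → ℝ)
    (μ : ℝ) (hμ : 0 < μ)
    (Ω : Set ((PiLp 2 fun i : Fin m => EuclideanSpace ℝ (Fin (ni i))) × (Fin m → ℝ)))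
    (hΩ : Ω = {p | p.1 ∈ X ∧ ∀ i, g i (p.1 i) ≤ p.2 i})
    (H : (PiLp 2 fun i : Fin m => EuclideanSpace ℝ (Fin (ni i))) → (Fin m → ℝ) → ℝ)
    (hH : H = fun x z => μ / 2 * ‖x‖ ^ 2 - f x - ∑ i, h i (z i))
    (xk xk1 : PiLp 2 fun i : Fin m => EuclideanSpace ℝ (Fin (ni i)))
    (hxk : xk ∈ X)
    (ξ : Fin m → ℝ)
    -- ξᵢ is a subgradient of −hᵢ at gᵢ(xᵏᵢ)
    (hξ : ∀ i, ∀ t : ℝ, -h i t ≥ -h i (g i (xk i)) + ξ i * (t - g i (xk i)))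
    (yk : PiLp 2 fun i : Fin m => EuclideanSpace ℝ (Fin (ni i)))
    (hyk : yk = μ • xk - gradient f xk)
    -- backtracking condition (5)
    (hback : H xk1 (fun i => g i (xk1 i)) ≥
      H xk (fun i => g i (xk i)) + inner ℝ yk (xk1 - xk) +
        ∑ i, ξ i * (g i (xk1 i) - g i (xk i)))
    -- (xᵏ⁺¹, g(xᵏ⁺¹)) minimizes the convex subproblem over Ω
    (hmem : (xk1, fun i => g i (xk1 i)) ∈ Ω)
    (hmin : ∀ p ∈ Ω,
      μ / 2 * ‖xk1‖ ^ 2 - inner ℝ yk xk1 - ∑ i, ξ i * g i (xk1 i) ≤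
        μ / 2 * ‖p.1‖ ^ 2 - inner ℝ yk p.1 - ∑ i, ξ i * p.2 i) :
    (f xk + ∑ i, h i (g i (xk i))) - (f xk1 + ∑ i, h i (g i (xk1 i))) ≥
      μ / 2 * ‖xk1 - xk‖ ^ 2 := by

  subst hΩ hH
  obtain ⟨hx1X, -⟩ := hmem
  simp only [ge_iff_le] at hback
  set d : PiLp 2 fun i : Fin m => EuclideanSpace ℝ (Fin (ni i)) := xk - xk1 with hd
  have hxeq : xk = xk1 + d := by rw [hd]; abel
  set C : ℝ := μ * (inner ℝ xk1 d : ℝ) - (inner ℝ yk d : ℝ)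
      - (∑ i, ξ i * g i (xk i)) + ∑ i, ξ i * g i (xk1 i) with hCdef
  have key : ∀ t : ℝ, 0 < t → t ≤ 1 → 0 ≤ C + μ / 2 * t * ‖d‖ ^ 2 := by
    intro t ht0 ht1
    have hmemt : ((xk1 + t • d,
        fun i => g i (xk1 i) + t * (g i (xk i) - g i (xk1 i))) :
        (PiLp 2 fun i : Fin m => EuclideanSpace ℝ (Fin (ni i))) × (Fin m → ℝ)) ∈
        {p : (PiLp 2 fun i : Fin m => EuclideanSpace ℝ (Fin (ni i))) × (Fin m → ℝ) |
          p.1 ∈ X ∧ ∀ i, g i (p.1 i) ≤ p.2 i} := by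
      constructor
      · have hx := hXconv hx1X hxk (by linarith : (0:ℝ) ≤ 1 - t) ht0.le (by ring)
        have heq : (1 - t) • xk1 + t • xk = xk1 + t • d := by rw [hd]; module
        rwa [heq] at hx
      · intro i
        dsimp only
        have hpt : (xk1 + t • d) i = (1 - t) • xk1 i + t • xk i := by
          simp only [hd, PiLp.add_apply, PiLp.smul_apply, PiLp.sub_apply]
          module
        rw [hpt]
        have hcv := (hgconv i).2 (Set.mem_univ (xk1 i)) (Set.mem_univ (xk i))
          (by linarith : (0:ℝ) ≤ 1 - t) ht0.le (by ring)
        calc g i ((1 - t) • xk1 i + t • xk i)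
            ≤ (1 - t) * g i (xk1 i) + t * g i (xk i) := hcv
          _ = g i (xk1 i) + t * (g i (xk i) - g i (xk1 i)) := by ring
    have hm := hmin _ hmemt
    simp only at hm
    have hnorm : ‖xk1 + t • d‖ ^ 2
        = ‖xk1‖ ^ 2 + 2 * (t * (inner ℝ xk1 d : ℝ)) + t ^ 2 * ‖d‖ ^ 2 := by
      rw [norm_add_sq_real, real_inner_smul_right, norm_smul, mul_pow, Real.norm_eq_abs,
        sq_abs]
    have hinner : (inner ℝ yk (xk1 + t • d) : ℝ)
        = (inner ℝ yk xk1 : ℝ) + t * (inner ℝ yk d : ℝ) := by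
      rw [inner_add_right, real_inner_smul_right]
    have hsum : ∑ i, ξ i * (g i (xk1 i) + t * (g i (xk i) - g i (xk1 i)))
        = (∑ i, ξ i * g i (xk1 i))
          + t * ((∑ i, ξ i * g i (xk i)) - ∑ i, ξ i * g i (xk1 i)) := by
      rw [← Finset.sum_sub_distrib, Finset.mul_sum, ← Finset.sum_add_distrib]
      exact Finset.sum_congr rfl fun i _ => by ring
    rw [hnorm, hinner, hsum] at hm
    have h1 : t * 0 ≤ t * (C + μ / 2 * t * ‖d‖ ^ 2) := by
      have hexp : t * (C + μ / 2 * t * ‖d‖ ^ 2)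
          = (μ / 2 * (‖xk1‖ ^ 2 + 2 * (t * (inner ℝ xk1 d : ℝ)) + t ^ 2 * ‖d‖ ^ 2)
              - ((inner ℝ yk xk1 : ℝ) + t * (inner ℝ yk d : ℝ))
              - ((∑ i, ξ i * g i (xk1 i))
                + t * ((∑ i, ξ i * g i (xk i)) - ∑ i, ξ i * g i (xk1 i))))
            - (μ / 2 * ‖xk1‖ ^ 2 - (inner ℝ yk xk1 : ℝ) - ∑ i, ξ i * g i (xk1 i)) := by
        rw [hCdef]; ring
      rw [mul_zero, hexp]
      linarith [hm]
    exact le_of_mul_le_mul_left h1 ht0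
  have hC : 0 ≤ C := by
    by_contra hC
    push_neg at hC
    set D : ℝ := μ / 2 * ‖d‖ ^ 2 with hDdef
    have hD : 0 ≤ D := by rw [hDdef]; positivity
    set t : ℝ := min 1 (-C / (D + 1)) with ht
    have ht0 : 0 < t := by
      apply lt_min one_pos
      apply div_pos (by linarith) (by linarith)
    have ht1 : t ≤ 1 := min_le_left _ _
    have ht2 : t ≤ -C / (D + 1) := min_le_right _ _
    have hkey := key t ht0 ht1
    have hDt : D * t ≤ D * (-C / (D + 1)) := mul_le_mul_of_nonneg_left ht2 hD
    have hlt : D * (-C / (D + 1)) < -C := by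
      rw [mul_comm, div_mul_eq_mul_div, div_lt_iff₀ (by linarith : (0:ℝ) < D + 1)]
      nlinarith
    have : μ / 2 * t * ‖d‖ ^ 2 = D * t := by rw [hDdef]; ring
    linarith [hkey, hDt, hlt]
  have hnx : μ / 2 * ‖xk‖ ^ 2
      = μ / 2 * (‖xk1‖ ^ 2 + 2 * (inner ℝ xk1 d : ℝ) + ‖d‖ ^ 2) := by
    rw [hxeq, norm_add_sq_real]
  have hIsub : (inner ℝ yk (xk1 - xk) : ℝ) = -(inner ℝ yk d : ℝ) := by
    rw [hd, ← inner_neg_right]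
    congr 1
    abel
  have hTsum : ∑ i, ξ i * (g i (xk1 i) - g i (xk i))
      = (∑ i, ξ i * g i (xk1 i)) - ∑ i, ξ i * g i (xk i) := by
    rw [← Finset.sum_sub_distrib]
    exact Finset.sum_congr rfl fun i _ => by ring
  have hnrm : ‖xk1 - xk‖ = ‖d‖ := by rw [hd]; exact norm_sub_rev _ _
  rw [hIsub, hTsum, hnx] at hback
  rw [ge_iff_le, hnrm]
  have hcomb : (μ / 2 * ‖xk1‖ ^ 2 - f xk1 - ∑ i, h i (g i (xk1 i)))
      - (μ / 2 * (‖xk1‖ ^ 2 + 2 * (inner ℝ xk1 d : ℝ) + ‖d‖ ^ 2) - f xk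
          - (∑ i, h i (g i (xk i))) + (-(inner ℝ yk d : ℝ))
          + ((∑ i, ξ i * g i (xk1 i)) - ∑ i, ξ i * g i (xk i)))
      = (f xk + ∑ i, h i (g i (xk i))) - (f xk1 + ∑ i, h i (g i (xk1 i)))
        - (C + μ / 2 * ‖d‖ ^ 2) := by
    rw [hCdef]; ring
  linarith [hback, hC, hcomb]
end

section
/- Let {r_k} be a nonincreasing nonnegative sequence with r_k^{2θ} ≤ C(r_k − r_{k+1}) for all k ≥ K, where θ ∈ (1/2, 1) and C > 0. Then there exists δ > 0 such that r_k ≤ δ·k^{−1/(2θ−1)} for all large k. -/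
open Filter Real

/-- Key convexity inequality: for `0 < b ≤ a` and `0 < α < 1`,
`b ^ (-α) ≥ a ^ (-α) + α * a ^ (-(α+1)) * (a - b)`. -/
lemma kl_aux_bernoulli {a b α : ℝ} (hb : 0 < b) (hba : b ≤ a) (hα0 : 0 < α) (hα1 : α < 1) :
    a ^ (-α) + α * (a ^ (-(α + 1)) * (a - b)) ≤ b ^ (-α) := by
  have ha : 0 < a := hb.trans_le hba
  set x : ℝ := b / a with hx
  have hx0 : 0 < x := div_pos hb ha
  have hx1 : x ≤ 1 := (div_le_one ha).2 hba
  have hbern : x ^ α ≤ 1 + α * (x - 1) := by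
    have := rpow_one_add_le_one_add_mul_self (s := x - 1) (by linarith) hα0.le hα1.le
    simpa using this
  have hxa : 0 < x ^ α := Real.rpow_pos_of_pos hx0 α
  have h2 : (1 + α * (1 - x)) * x ^ α ≤ 1 := by nlinarith [sq_nonneg (α * (1 - x))]
  have hineq : 1 + α * (1 - x) ≤ x ^ (-α) := by
    rw [Real.rpow_neg hx0.le, ← one_div]
    exact (le_div_iff₀ hxa).2 h2
  have hb' : a * x = b := by rw [hx]; field_simp
  have key : a ^ (-(α + 1)) = a ^ (-α) / a := by
    rw [show -(α + 1) = -α + (-1) by ring, Real.rpow_add ha, Real.rpow_neg_one,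
      div_eq_mul_inv]
  have e : a ^ (-α) * (1 - x) = a ^ (-(α + 1)) * (a - b) := by
    rw [key, hx]
    field_simp
  have hmul : a ^ (-α) * (1 + α * (1 - x)) ≤ a ^ (-α) * x ^ (-α) :=
    mul_le_mul_of_nonneg_left hineq (Real.rpow_nonneg ha.le _)
  calc a ^ (-α) + α * (a ^ (-(α + 1)) * (a - b))
      = a ^ (-α) * (1 + α * (1 - x)) := by rw [← e]; ring
    _ ≤ a ^ (-α) * x ^ (-α) := hmul
    _ = (a * x) ^ (-α) := (Real.mul_rpow ha.le hx0.le).symm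
    _ = b ^ (-α) := by rw [hb']

theorem kl_sublinear_rate
    (r : ℕ → ℝ) (θ C : ℝ) (K : ℕ)
    (hnonneg : ∀ k, 0 ≤ r k)
    (hmono : ∀ k, r (k + 1) ≤ r k)
    (hθ : 1 / 2 < θ) (hθ1 : θ < 1) (hC : 0 < C)
    (hKL : ∀ k ≥ K, (r k) ^ (2 * θ) ≤ C * (r k - r (k + 1))) :
    ∃ δ > 0, ∃ N : ℕ, ∀ k ≥ N, r k ≤ δ * (k : ℝ) ^ (-(1 / (2 * θ - 1))) := by
  set α : ℝ := 2 * θ - 1 with hα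
  have hα0 : 0 < α := by rw [hα]; linarith
  have hα1 : α < 1 := by rw [hα]; linarith
  clear_value α
  by_cases hzero : ∃ m, r m = 0
  · obtain ⟨m, hm⟩ := hzero
    refine ⟨1, one_pos, m, fun k hk => ?_⟩
    have hall : ∀ n, r (m + n) = 0 := by
      intro n
      induction n with
      | zero => simpa using hm
      | succ n ih => exact le_antisymm (ih ▸ hmono (m + n)) (hnonneg _)
    have hrk : r k = 0 := by
      have := hall (k - m)
      rwa [Nat.add_sub_cancel' hk] at this
    rw [hrk]
    positivity
  · push_neg at hzero
    have hpos : ∀ k, 0 < r k := fun k => (hnonneg k).lt_of_ne (Ne.symm (hzero k))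
    -- key step inequality
    have step : ∀ k ≥ K, (r k) ^ (-α) + α / C ≤ (r (k + 1)) ^ (-α) := by
      intro k hk
      have hab := kl_aux_bernoulli (hpos (k + 1)) (hmono k) hα0 hα1
      have hgap : (r k) ^ (2 * θ) / C ≤ r k - r (k + 1) :=
        (div_le_iff₀' hC).2 (hKL k hk)
      have hone : (r k) ^ (-(α + 1)) * (r k) ^ (2 * θ) = 1 := by
        rw [← Real.rpow_add (hpos k)]
        norm_num [hα]
      have hbase : (0:ℝ) < (r k) ^ (-(α + 1)) := Real.rpow_pos_of_pos (hpos k) _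
      have h1C : 1 / C ≤ (r k) ^ (-(α + 1)) * (r k - r (k + 1)) := by
        have e1 : (r k) ^ (-(α + 1)) * ((r k) ^ (2 * θ) / C)
            = ((r k) ^ (-(α + 1)) * (r k) ^ (2 * θ)) / C := by ring
        calc 1 / C = (r k) ^ (-(α + 1)) * ((r k) ^ (2 * θ) / C) := by
              rw [e1, hone]
          _ ≤ (r k) ^ (-(α + 1)) * (r k - r (k + 1)) :=
              mul_le_mul_of_nonneg_left hgap hbase.le
      have h3 : α * (1 / C) ≤ α * ((r k) ^ (-(α + 1)) * (r k - r (k + 1))) :=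
        mul_le_mul_of_nonneg_left h1C hα0.le
      have h4 : α / C = α * (1 / C) := by ring
      linarith
    -- induction: (r (K+n))^{-α} ≥ n * (α/C)
    have hiter : ∀ n : ℕ, (n : ℝ) * (α / C) ≤ (r (K + n)) ^ (-α) := by
      intro n
      induction n with
      | zero => simpa using Real.rpow_nonneg (hnonneg (K + 0)) (-α)
      | succ n ih =>
        have hs := step (K + n) (Nat.le_add_right K n)
        push_cast
        have e2 : ((n : ℝ) + 1) * (α / C) = (n : ℝ) * (α / C) + α / C := by ring
        rw [e2, show K + (n + 1) = (K + n) + 1 from rfl]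
        linarith
    have hbound : ∀ k ≥ K, ((k - K : ℕ) : ℝ) * (α / C) ≤ (r k) ^ (-α) := by
      intro k hk
      have := hiter (k - K)
      rwa [Nat.add_sub_cancel' hk] at this
    refine ⟨(α / (2 * C)) ^ (-(1 / α)), Real.rpow_pos_of_pos (by positivity) _,
      max (2 * K) 1, fun k hk => ?_⟩
    have hk1 : 1 ≤ k := le_of_max_le_right hk
    have hk2K : 2 * K ≤ k := le_of_max_le_left hk
    have hkK : K ≤ k := le_trans (by omega) hk2K
    have hhalf : (k : ℝ) / 2 ≤ ((k - K : ℕ) : ℝ) := by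
      rw [Nat.cast_sub hkK]
      have : (2 * (K : ℝ)) ≤ (k : ℝ) := by exact_mod_cast hk2K
      linarith
    have hM : (k : ℝ) * (α / (2 * C)) ≤ (r k) ^ (-α) := by
      have h1 := hbound k hkK
      have hαC : (0:ℝ) ≤ α / C := by positivity
      have h2 : (k : ℝ) * (α / (2 * C)) ≤ ((k - K : ℕ) : ℝ) * (α / C) := by
        calc (k : ℝ) * (α / (2 * C)) = ((k : ℝ) / 2) * (α / C) := by ring
          _ ≤ ((k - K : ℕ) : ℝ) * (α / C) := mul_le_mul_of_nonneg_right hhalf hαC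
      linarith
    have hkpos : (0:ℝ) < (k : ℝ) := by exact_mod_cast hk1
    have hMpos : (0:ℝ) < (k : ℝ) * (α / (2 * C)) := by positivity
    have hrk : r k = ((r k) ^ (-α)) ^ (-(1 / α)) := by
      rw [← Real.rpow_mul (hnonneg k),
        show (-α) * (-(1 / α)) = 1 by rw [neg_mul_neg, mul_one_div, div_self hα0.ne'],
        Real.rpow_one]
    calc r k = ((r k) ^ (-α)) ^ (-(1 / α)) := hrk
      _ ≤ ((k : ℝ) * (α / (2 * C))) ^ (-(1 / α)) :=
          Real.rpow_le_rpow_of_nonpos hMpos hM (neg_nonpos.2 (by positivity))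
      _ = (α / (2 * C)) ^ (-(1 / α)) * (k : ℝ) ^ (-(1 / α)) := by
          rw [Real.mul_rpow hkpos.le (by positivity)]
          ring
end

section
/- The function f(x) = log(Σ_{i≠j}(1 + ‖x_i − x_j‖²)^{−1}) on (ℝˢ)ⁿ is differentiable with Lipschitz continuous gradient, and L = 6n√s is a valid Lipschitz constant for ∇f. -/
open Real Finset

noncomputable section TsneAux

variable (n s : ℕ)

local notation "E" => EuclideanSpace ℝ (Fin n × Fin s)
local notation "F" => EuclideanSpace ℝ (Fin s)

def tsneA (p : Fin n × Fin n) : E →L[ℝ] F :=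
  LinearMap.toContinuousLinearMap
    { toFun := fun x => WithLp.toLp 2 (fun k => x (p.1, k) - x (p.2, k))
      map_add' := by intro x y; ext k; simp [PiLp.add_apply]; ring
      map_smul' := by intro c x; ext k; simp [PiLp.smul_apply, smul_eq_mul]; ring }

@[simp] lemma tsneA_apply (p : Fin n × Fin n) (x : E) (k : Fin s) :
    tsneA n s p x k = x (p.1, k) - x (p.2, k) := rfl

lemma tsneA_norm_le (p : Fin n × Fin n) (hp : p.1 ≠ p.2) (x : E) :
    ‖tsneA n s p x‖ ≤ Real.sqrt 2 * ‖x‖ := by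
  have h2 : (0:ℝ) ≤ Real.sqrt 2 * ‖x‖ := by positivity
  rw [← Real.sqrt_sq (norm_nonneg (tsneA n s p x)), ← Real.sqrt_sq h2]
  apply Real.sqrt_le_sqrt
  have hx : ‖x‖ ^ 2 = ∑ q : Fin n × Fin s, x q ^ 2 := by
    rw [EuclideanSpace.norm_eq, Real.sq_sqrt (by positivity)]
    simp [Real.norm_eq_abs, sq_abs]
  have hA : ‖tsneA n s p x‖ ^ 2 = ∑ k : Fin s, (x (p.1, k) - x (p.2, k)) ^ 2 := by
    rw [EuclideanSpace.norm_eq, Real.sq_sqrt (by positivity)]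
    simp [Real.norm_eq_abs, sq_abs]
  rw [hA, mul_pow, Real.sq_sqrt (by norm_num : (0:ℝ) ≤ 2), hx]
  have key : ∀ k : Fin s, (x (p.1, k) - x (p.2, k)) ^ 2
      ≤ 2 * (x (p.1, k) ^ 2 + x (p.2, k) ^ 2) := fun k => by nlinarith [sq_nonneg (x (p.1,k) + x (p.2,k))]
  calc ∑ k : Fin s, (x (p.1, k) - x (p.2, k)) ^ 2
      ≤ ∑ k : Fin s, 2 * (x (p.1, k) ^ 2 + x (p.2, k) ^ 2) := Finset.sum_le_sum (fun k _ => key k)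
    _ = 2 * ∑ a ∈ ({p.1, p.2} : Finset (Fin n)), ∑ k : Fin s, x (a, k) ^ 2 := by
        rw [Finset.sum_pair hp, ← Finset.sum_add_distrib, Finset.mul_sum]
    _ ≤ 2 * ∑ a : Fin n, ∑ k : Fin s, x (a, k) ^ 2 := by
        apply mul_le_mul_of_nonneg_left _ (by norm_num)
        exact Finset.sum_le_sum_of_subset_of_nonneg (Finset.subset_univ _)
          (fun a _ _ => Finset.sum_nonneg fun k _ => sq_nonneg _)
    _ = 2 * ∑ q : Fin n × Fin s, x q ^ 2 := by rw [Fintype.sum_prod_type]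

open RealInnerProductSpace in
lemma real_stub : True := trivial

def tsneP : Finset (Fin n × Fin n) := Finset.univ.filter (fun p => p.1 ≠ p.2)

def tsnet (p : Fin n × Fin n) (x : E) : ℝ := ‖tsneA n s p x‖ ^ 2

lemma tsnet_nonneg (p) (x : E) : 0 ≤ tsnet n s p x := sq_nonneg _

def tsnew (p : Fin n × Fin n) (x : E) : ℝ := (1 + tsnet n s p x)⁻¹

lemma one_add_t_pos (p) (x : E) : (0:ℝ) < 1 + tsnet n s p x := by
  have := tsnet_nonneg n s p x; linarith

lemma tsnew_pos (p) (x : E) : 0 < tsnew n s p x := inv_pos.2 (one_add_t_pos n s p x)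

lemma tsnew_le_one (p) (x : E) : tsnew n s p x ≤ 1 := by
  rw [tsnew, inv_le_one_iff₀]; right; have := tsnet_nonneg n s p x; linarith

def tsneg (x : E) : ℝ := ∑ p ∈ tsneP n, tsnew n s p x

lemma tsneg_pos (hn : 2 ≤ n) (x : E) : 0 < tsneg n s x := by
  have hmem : ((⟨0, by omega⟩ : Fin n), (⟨1, by omega⟩ : Fin n)) ∈ tsneP n := by
    simp [tsneP, Fin.ext_iff]
  exact Finset.sum_pos' (fun p _ => (tsnew_pos n s p x).le) ⟨_, hmem, tsnew_pos n s _ x⟩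

def tsneDt (p : Fin n × Fin n) (x : E) : E →L[ℝ] ℝ :=
  (2:ℝ) • ((innerSL ℝ (tsneA n s p x)).comp (tsneA n s p))

lemma tsneDt_apply (p) (x u : E) :
    tsneDt n s p x u = 2 * (inner ℝ (tsneA n s p x) (tsneA n s p u) : ℝ) := by
  simp [tsneDt]

lemma hasFDerivAt_t (p) (x : E) : HasFDerivAt (tsnet n s p) (tsneDt n s p x) x := by
  have he : tsnet n s p = fun y => (inner ℝ (tsneA n s p y) (tsneA n s p y) : ℝ) :=
    funext fun y => (real_inner_self_eq_norm_sq _).symm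
  rw [he]
  have h := HasFDerivAt.inner (𝕜 := ℝ) ((tsneA n s p).hasFDerivAt (x := x))
    ((tsneA n s p).hasFDerivAt (x := x))
  refine h.congr_fderiv ?_
  symm
  ext u
  simp only [tsneDt, ContinuousLinearMap.smul_apply, ContinuousLinearMap.comp_apply,
    innerSL_apply_apply, ContinuousLinearMap.prod_apply, fderivInnerCLM_apply, smul_eq_mul]
  rw [real_inner_comm (tsneA n s p u)]
  ring

def tsneDw (p : Fin n × Fin n) (x : E) : E →L[ℝ] ℝ :=
  (-(tsnew n s p x) ^ 2) • tsneDt n s p x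

lemma hasFDerivAt_w (p) (x : E) : HasFDerivAt (tsnew n s p) (tsneDw n s p x) x := by
  have h1 := one_add_t_pos n s p x
  have ht : HasFDerivAt (fun y => 1 + tsnet n s p y) (tsneDt n s p x) x :=
    (hasFDerivAt_t n s p x).const_add 1
  have h := (hasDerivAt_inv h1.ne').comp_hasFDerivAt x ht
  refine h.congr_fderiv ?_
  symm
  rw [tsneDw, tsnew]
  congr 1
  rw [inv_pow]

def tsneDg (x : E) : E →L[ℝ] ℝ := ∑ p ∈ tsneP n, tsneDw n s p x

lemma hasFDerivAt_g (x : E) : HasFDerivAt (tsneg n s) (tsneDg n s x) x :=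
  HasFDerivAt.fun_sum (fun p _ => hasFDerivAt_w n s p x)

def tsneG (x : E) : E →L[ℝ] ℝ := (tsneg n s x)⁻¹ • tsneDg n s x

lemma hasFDerivAt_f (hn : 2 ≤ n) (x : E) :
    HasFDerivAt (fun y => Real.log (tsneg n s y)) (tsneG n s x) x :=
  (hasFDerivAt_g n s x).log (tsneg_pos n s hn x).ne'

lemma tsnet_eq (p) (x : E) :
    tsnet n s p x = ∑ k : Fin s, (x (p.1, k) - x (p.2, k)) ^ 2 := by
  rw [tsnet, EuclideanSpace.norm_eq, Real.sq_sqrt (by positivity)]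
  simp [Real.norm_eq_abs, sq_abs]

lemma mem_tsneP {p : Fin n × Fin n} (hp : p ∈ tsneP n) : p.1 ≠ p.2 := by
  simpa [tsneP] using hp

lemma two_r_w_le_one (p) (x : E) :
    2 * ‖tsneA n s p x‖ * tsnew n s p x ≤ 1 := by
  have hw := tsnew_pos n s p x
  have hc : (1 + tsnet n s p x) * tsnew n s p x = 1 :=
    mul_inv_cancel₀ (one_add_t_pos n s p x).ne'
  have h : 2 * ‖tsneA n s p x‖ ≤ 1 + tsnet n s p x := by
    have : tsnet n s p x = ‖tsneA n s p x‖ ^ 2 := rfl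
    nlinarith [sq_nonneg (‖tsneA n s p x‖ - 1)]
  calc 2 * ‖tsneA n s p x‖ * tsnew n s p x
      ≤ (1 + tsnet n s p x) * tsnew n s p x := by
        exact mul_le_mul_of_nonneg_right h hw.le
    _ = 1 := hc

lemma tsneDt_opNorm_le {p : Fin n × Fin n} (hp : p.1 ≠ p.2) (x : E) :
    ‖tsneDt n s p x‖ ≤ 2 * Real.sqrt 2 * ‖tsneA n s p x‖ := by
  apply ContinuousLinearMap.opNorm_le_bound _ (by positivity)
  intro u
  rw [tsneDt_apply, Real.norm_eq_abs, abs_mul, abs_two]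
  calc 2 * |(inner ℝ (tsneA n s p x) (tsneA n s p u) : ℝ)|
      ≤ 2 * (‖tsneA n s p x‖ * ‖tsneA n s p u‖) := by
        have := abs_real_inner_le_norm (tsneA n s p x) (tsneA n s p u)
        linarith
    _ ≤ 2 * (‖tsneA n s p x‖ * (Real.sqrt 2 * ‖u‖)) := by
        have := tsneA_norm_le n s p hp u
        have h0 : (0:ℝ) ≤ ‖tsneA n s p x‖ := norm_nonneg _
        nlinarith
    _ = 2 * Real.sqrt 2 * ‖tsneA n s p x‖ * ‖u‖ := by ring

lemma tsneDw_opNorm_le {p : Fin n × Fin n} (hp : p.1 ≠ p.2) (x : E) :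
    ‖tsneDw n s p x‖ ≤ Real.sqrt 2 * tsnew n s p x := by
  have hw := tsnew_pos n s p x
  rw [tsneDw]
  calc ‖(-(tsnew n s p x) ^ 2) • tsneDt n s p x‖
      = tsnew n s p x ^ 2 * ‖tsneDt n s p x‖ := by
        rw [norm_smul (-(tsnew n s p x) ^ 2) (tsneDt n s p x), Real.norm_eq_abs]
        congr 1
        rw [abs_neg, abs_pow, abs_of_pos hw]
    _ ≤ tsnew n s p x ^ 2 * (2 * Real.sqrt 2 * ‖tsneA n s p x‖) := by
        exact mul_le_mul_of_nonneg_left (tsneDt_opNorm_le n s hp x) (by positivity)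
    _ = (Real.sqrt 2 * tsnew n s p x) * (2 * ‖tsneA n s p x‖ * tsnew n s p x) := by ring
    _ ≤ (Real.sqrt 2 * tsnew n s p x) * 1 := by
        exact mul_le_mul_of_nonneg_left (two_r_w_le_one n s p x) (by positivity)
    _ = Real.sqrt 2 * tsnew n s p x := mul_one _

lemma tsneDg_opNorm_le (x : E) : ‖tsneDg n s x‖ ≤ Real.sqrt 2 * tsneg n s x := by
  rw [tsneDg, tsneg, Finset.mul_sum]
  refine (norm_sum_le _ _).trans (Finset.sum_le_sum fun p hp => ?_)
  exact tsneDw_opNorm_le n s (mem_tsneP n hp) x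

def tsneT (p : Fin n × Fin n) : E →L[ℝ] (E →L[ℝ] ℝ) :=
  LinearMap.toContinuousLinearMap
    { toFun := fun x => tsneDt n s p x
      map_add' := by
        intro x y; ext u
        simp only [tsneDt_apply, map_add, inner_add_left, ContinuousLinearMap.add_apply]
        ring
      map_smul' := by
        intro c x; ext u
        simp only [tsneDt_apply, map_smul, real_inner_smul_left, RingHom.id_apply,
          ContinuousLinearMap.smul_apply, smul_eq_mul]
        ring }

lemma tsneT_apply (p) (x : E) : tsneT n s p x = tsneDt n s p x := rfl

def tsneHDw (p : Fin n × Fin n) (x : E) : E →L[ℝ] (E →L[ℝ] ℝ) :=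
  (-(tsnew n s p x) ^ 2) • tsneT n s p +
    (-(tsnew n s p x • tsneDw n s p x + tsnew n s p x • tsneDw n s p x)).smulRight
      (tsneDt n s p x)

lemma hasFDerivAt_Dw (p) (x : E) :
    HasFDerivAt (fun y => tsneDw n s p y) (tsneHDw n s p x) x := by
  have hc : HasFDerivAt (fun y => -(tsnew n s p y) ^ 2)
      (-(tsnew n s p x • tsneDw n s p x + tsnew n s p x • tsneDw n s p x)) x := by
    have h := ((hasFDerivAt_w n s p x).fun_mul (hasFDerivAt_w n s p x)).fun_neg
    have he : (fun y => -(tsnew n s p y * tsnew n s p y)) = fun y => -(tsnew n s p y) ^ 2 := by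
      funext y; ring
    rw [he] at h
    exact h
  have hf : HasFDerivAt (fun y => tsneDt n s p y) (tsneT n s p) x :=
    (tsneT n s p).hasFDerivAt (x := x)
  exact hc.smul hf

lemma tsneHDw_opNorm_le {p : Fin n × Fin n} (hp : p.1 ≠ p.2) (x : E) :
    ‖tsneHDw n s p x‖ ≤ 8 * tsnew n s p x := by
  have hw := tsnew_pos n s p x
  have hw1 := tsnew_le_one n s p x
  apply ContinuousLinearMap.opNorm_le_bound _ (by positivity)
  intro u
  rw [tsneHDw, ContinuousLinearMap.add_apply]
  refine (norm_add_le _ _).trans ?_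
  have h1 : ‖((-(tsnew n s p x) ^ 2) • tsneT n s p) u‖ ≤ 4 * tsnew n s p x * ‖u‖ := by
    rw [ContinuousLinearMap.smul_apply,
      norm_smul (-(tsnew n s p x) ^ 2) (tsneT n s p u), Real.norm_eq_abs, abs_neg, abs_pow,
      abs_of_pos hw, tsneT_apply]
    have hAu := tsneA_norm_le n s p hp u
    have hDtu : ‖tsneDt n s p u‖ ≤ 4 * ‖u‖ := by
      refine (tsneDt_opNorm_le n s hp u).trans ?_
      calc 2 * Real.sqrt 2 * ‖tsneA n s p u‖ ≤ 2 * Real.sqrt 2 * (Real.sqrt 2 * ‖u‖) := by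
            apply mul_le_mul_of_nonneg_left hAu (by positivity)
        _ = 2 * (Real.sqrt 2 * Real.sqrt 2) * ‖u‖ := by ring
        _ = 4 * ‖u‖ := by rw [Real.mul_self_sqrt (by norm_num : (0:ℝ) ≤ 2)]; ring
    calc tsnew n s p x ^ 2 * ‖tsneDt n s p u‖
        ≤ tsnew n s p x ^ 2 * (4 * ‖u‖) := mul_le_mul_of_nonneg_left hDtu (by positivity)
      _ = 4 * (tsnew n s p x * tsnew n s p x) * ‖u‖ := by ring
      _ ≤ 4 * (tsnew n s p x * 1) * ‖u‖ := by
          have : tsnew n s p x * tsnew n s p x ≤ tsnew n s p x * 1 :=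
            mul_le_mul_of_nonneg_left hw1 hw.le
          have h0 := norm_nonneg u
          nlinarith
      _ = 4 * tsnew n s p x * ‖u‖ := by ring
  have h2 : ‖((-(tsnew n s p x • tsneDw n s p x + tsnew n s p x • tsneDw n s p x)).smulRight
      (tsneDt n s p x)) u‖ ≤ 4 * tsnew n s p x * ‖u‖ := by
    have happ : ((-(tsnew n s p x • tsneDw n s p x + tsnew n s p x • tsneDw n s p x)).smulRight
        (tsneDt n s p x)) u
        = (-(tsnew n s p x * tsneDw n s p x u + tsnew n s p x * tsneDw n s p x u)) •
            tsneDt n s p x := by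
      simp [ContinuousLinearMap.smulRight_apply]
    rw [happ, norm_smul (-(tsnew n s p x * tsneDw n s p x u + tsnew n s p x * tsneDw n s p x u))
      (tsneDt n s p x), Real.norm_eq_abs, abs_neg]
    have hd : |tsneDw n s p x u| ≤ Real.sqrt 2 * tsnew n s p x * ‖u‖ := by
      calc |tsneDw n s p x u| = ‖tsneDw n s p x u‖ := (Real.norm_eq_abs _).symm
        _ ≤ ‖tsneDw n s p x‖ * ‖u‖ := (tsneDw n s p x).le_opNorm u
        _ ≤ Real.sqrt 2 * tsnew n s p x * ‖u‖ :=
            mul_le_mul_of_nonneg_right (tsneDw_opNorm_le n s hp x) (norm_nonneg _)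
    have habs : |tsnew n s p x * tsneDw n s p x u + tsnew n s p x * tsneDw n s p x u|
        = 2 * (tsnew n s p x * |tsneDw n s p x u|) := by
      rw [← two_mul, abs_mul, abs_two, abs_mul, abs_of_pos hw]
    rw [habs]
    have hDt := tsneDt_opNorm_le n s hp x
    have hrw := two_r_w_le_one n s p x
    have hr0 : (0:ℝ) ≤ ‖tsneA n s p x‖ := norm_nonneg _
    have hu0 : (0:ℝ) ≤ ‖u‖ := norm_nonneg u
    have hs2 : Real.sqrt 2 * Real.sqrt 2 = 2 := Real.mul_self_sqrt (by norm_num)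
    have hs2' : (0:ℝ) < Real.sqrt 2 := by positivity
    calc 2 * (tsnew n s p x * |tsneDw n s p x u|) * ‖tsneDt n s p x‖
        ≤ 2 * (tsnew n s p x * (Real.sqrt 2 * tsnew n s p x * ‖u‖)) *
            (2 * Real.sqrt 2 * ‖tsneA n s p x‖) := by
          apply mul_le_mul
          · apply mul_le_mul_of_nonneg_left _ (by norm_num)
            exact mul_le_mul_of_nonneg_left hd hw.le
          · exact hDt
          · exact norm_nonneg _
          · positivity
      _ = (4 * tsnew n s p x * ‖u‖) * (Real.sqrt 2 * Real.sqrt 2) *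
            (‖tsneA n s p x‖ * tsnew n s p x) := by ring
      _ = (4 * tsnew n s p x * ‖u‖) * (2 * ‖tsneA n s p x‖ * tsnew n s p x) := by
          rw [hs2]; ring
      _ ≤ (4 * tsnew n s p x * ‖u‖) * 1 :=
          mul_le_mul_of_nonneg_left hrw (by positivity)
      _ = 4 * tsnew n s p x * ‖u‖ := mul_one _
  calc ‖((-(tsnew n s p x) ^ 2) • tsneT n s p) u‖ +
        ‖((-(tsnew n s p x • tsneDw n s p x + tsnew n s p x • tsneDw n s p x)).smulRight
          (tsneDt n s p x)) u‖
      ≤ 4 * tsnew n s p x * ‖u‖ + 4 * tsnew n s p x * ‖u‖ := add_le_add h1 h2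
    _ = 8 * tsnew n s p x * ‖u‖ := by ring

def tsneHDg (x : E) : E →L[ℝ] (E →L[ℝ] ℝ) := ∑ p ∈ tsneP n, tsneHDw n s p x

lemma hasFDerivAt_Dg (x : E) :
    HasFDerivAt (fun y => tsneDg n s y) (tsneHDg n s x) x := by
  have h : (fun y => tsneDg n s y) = fun y => ∑ p ∈ tsneP n, tsneDw n s p y := rfl
  rw [h]
  exact HasFDerivAt.fun_sum (fun p _ => hasFDerivAt_Dw n s p x)

lemma tsneHDg_opNorm_le (x : E) : ‖tsneHDg n s x‖ ≤ 8 * tsneg n s x := by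
  rw [tsneHDg, tsneg, Finset.mul_sum]
  refine (norm_sum_le (tsneP n) (fun p => tsneHDw n s p x)).trans
    (Finset.sum_le_sum fun p hp => ?_)
  exact tsneHDw_opNorm_le n s (mem_tsneP n hp) x

def tsneH (x : E) : E →L[ℝ] (E →L[ℝ] ℝ) :=
  (tsneg n s x)⁻¹ • tsneHDg n s x +
    (-(tsneg n s x ^ 2)⁻¹ • tsneDg n s x).smulRight (tsneDg n s x)

lemma hasFDerivAt_G (hn : 2 ≤ n) (x : E) :
    HasFDerivAt (fun y => tsneG n s y) (tsneH n s x) x := by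
  have hg := tsneg_pos n s hn x
  have hc : HasFDerivAt (fun y => (tsneg n s y)⁻¹)
      (-(tsneg n s x ^ 2)⁻¹ • tsneDg n s x) x :=
    (hasDerivAt_inv hg.ne').comp_hasFDerivAt x (hasFDerivAt_g n s x)
  exact hc.smul (hasFDerivAt_Dg n s x)

lemma tsneH_opNorm_le (hn : 2 ≤ n) (x : E) : ‖tsneH n s x‖ ≤ 10 := by
  have hg := tsneg_pos n s hn x
  apply ContinuousLinearMap.opNorm_le_bound _ (by norm_num)
  intro u
  rw [tsneH, ContinuousLinearMap.add_apply]
  refine (norm_add_le _ _).trans ?_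
  have h1 : ‖((tsneg n s x)⁻¹ • tsneHDg n s x) u‖ ≤ 8 * ‖u‖ := by
    rw [ContinuousLinearMap.smul_apply,
      norm_smul ((tsneg n s x)⁻¹) (tsneHDg n s x u), Real.norm_eq_abs,
      abs_of_pos (inv_pos.2 hg)]
    calc (tsneg n s x)⁻¹ * ‖tsneHDg n s x u‖
        ≤ (tsneg n s x)⁻¹ * (8 * tsneg n s x * ‖u‖) := by
          apply mul_le_mul_of_nonneg_left _ (by positivity)
          calc ‖tsneHDg n s x u‖ ≤ ‖tsneHDg n s x‖ * ‖u‖ := (tsneHDg n s x).le_opNorm u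
            _ ≤ 8 * tsneg n s x * ‖u‖ :=
                mul_le_mul_of_nonneg_right (tsneHDg_opNorm_le n s x) (norm_nonneg _)
      _ = 8 * ‖u‖ * ((tsneg n s x)⁻¹ * tsneg n s x) := by ring
      _ = 8 * ‖u‖ := by rw [inv_mul_cancel₀ hg.ne']; ring
  have h2 : ‖((-(tsneg n s x ^ 2)⁻¹ • tsneDg n s x).smulRight (tsneDg n s x)) u‖
      ≤ 2 * ‖u‖ := by
    have happ : ((-(tsneg n s x ^ 2)⁻¹ • tsneDg n s x).smulRight (tsneDg n s x)) u
        = (-(tsneg n s x ^ 2)⁻¹ * tsneDg n s x u) • tsneDg n s x := by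
      simp [ContinuousLinearMap.smulRight_apply, neg_smul]
      exact (neg_smul _ _).symm
    rw [happ, norm_smul (-(tsneg n s x ^ 2)⁻¹ * tsneDg n s x u) (tsneDg n s x),
      Real.norm_eq_abs, abs_mul, abs_neg, abs_inv, abs_pow, abs_of_pos hg]
    have hDg := tsneDg_opNorm_le n s x
    have hDgu : |tsneDg n s x u| ≤ Real.sqrt 2 * tsneg n s x * ‖u‖ := by
      calc |tsneDg n s x u| = ‖tsneDg n s x u‖ := (Real.norm_eq_abs _).symm
        _ ≤ ‖tsneDg n s x‖ * ‖u‖ := (tsneDg n s x).le_opNorm u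
        _ ≤ Real.sqrt 2 * tsneg n s x * ‖u‖ :=
            mul_le_mul_of_nonneg_right hDg (norm_nonneg _)
    have hs2 : Real.sqrt 2 * Real.sqrt 2 = 2 := Real.mul_self_sqrt (by norm_num)
    have hs2' : (0:ℝ) < Real.sqrt 2 := by positivity
    calc (tsneg n s x ^ 2)⁻¹ * |tsneDg n s x u| * ‖tsneDg n s x‖
        ≤ (tsneg n s x ^ 2)⁻¹ * (Real.sqrt 2 * tsneg n s x * ‖u‖) *
            (Real.sqrt 2 * tsneg n s x) := by
          apply mul_le_mul
          · exact mul_le_mul_of_nonneg_left hDgu (by positivity)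
          · exact hDg
          · exact norm_nonneg _
          · positivity
      _ = (Real.sqrt 2 * Real.sqrt 2) * ‖u‖ * (tsneg n s x ^ 2 * (tsneg n s x ^ 2)⁻¹) := by
          ring
      _ = 2 * ‖u‖ := by
          rw [hs2, mul_inv_cancel₀ (by positivity : (tsneg n s x ^ 2) ≠ 0), mul_one]
  linarith

lemma tsneG_lipschitz (hn : 2 ≤ n) (C : NNReal) (hC : (10:ℝ) ≤ C) :
    LipschitzWith C (fun x : E => tsneG n s x) := by
  rw [← lipschitzOnWith_univ]
  apply Convex.lipschitzOnWith_of_nnnorm_hasFDerivWithin_le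
    (f' := fun x => tsneH n s x)
    (fun x _ => (hasFDerivAt_G n s hn x).hasFDerivWithinAt)
    (fun x _ => ?_) convex_univ
  rw [← NNReal.coe_le_coe, coe_nnnorm]
  exact (tsneH_opNorm_le n s hn x).trans hC

end TsneAux

theorem tsne_smooth_part_lipschitz_gradient
    (n s : ℕ) (hn : 2 ≤ n)
    (f : EuclideanSpace ℝ (Fin n × Fin s) → ℝ)
    (hf : f = fun x => Real.log
      (∑ p ∈ Finset.univ.filter (fun p : Fin n × Fin n => p.1 ≠ p.2),
        (1 + ∑ k : Fin s, (x (p.1, k) - x (p.2, k)) ^ 2)⁻¹)) :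
    Differentiable ℝ f ∧
      LipschitzWith (Real.toNNReal (6 * n * Real.sqrt s)) (gradient f) := by
  subst hf
  rcases Nat.eq_zero_or_pos s with hs | hs
  · subst hs
    have hconst : (fun x : EuclideanSpace ℝ (Fin n × Fin 0) => Real.log
        (∑ p ∈ Finset.univ.filter (fun p : Fin n × Fin n => p.1 ≠ p.2),
          (1 + ∑ k : Fin 0, (x (p.1, k) - x (p.2, k)) ^ 2)⁻¹))
        = fun _ => Real.log
          (∑ p ∈ Finset.univ.filter (fun p : Fin n × Fin n => p.1 ≠ p.2), (1:ℝ)) := by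
      funext x
      simp
    rw [hconst]
    refine ⟨differentiable_const _, ?_⟩
    have hg : gradient (fun _ : EuclideanSpace ℝ (Fin n × Fin 0) => Real.log
        (∑ p ∈ Finset.univ.filter (fun p : Fin n × Fin n => p.1 ≠ p.2), (1:ℝ)))
        = fun _ => 0 := funext fun x => gradient_const x _
    rw [hg]
    exact (LipschitzWith.const 0).weaken zero_le
  · have hfe : (fun x : EuclideanSpace ℝ (Fin n × Fin s) => Real.log
        (∑ p ∈ Finset.univ.filter (fun p : Fin n × Fin n => p.1 ≠ p.2),
          (1 + ∑ k : Fin s, (x (p.1, k) - x (p.2, k)) ^ 2)⁻¹))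
        = fun y => Real.log (tsneg n s y) := by
      funext y
      simp only [tsneg, tsnew, tsnet_eq, tsneP]
    rw [hfe]
    have hC : (10:ℝ) ≤ (Real.toNNReal (6 * n * Real.sqrt s) : ℝ) := by
      have hs1 : (1:ℝ) ≤ Real.sqrt s := by
        rw [Real.one_le_sqrt]
        · exact_mod_cast hs
      have hn2 : (2:ℝ) ≤ (n:ℝ) := by exact_mod_cast hn
      have hnn : (0:ℝ) ≤ 6 * n * Real.sqrt s := by positivity
      rw [Real.coe_toNNReal _ hnn]
      nlinarith
    constructor
    · exact fun x => (hasFDerivAt_f n s hn x).differentiableAt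
    · have hgrad : gradient (fun y : EuclideanSpace ℝ (Fin n × Fin s) =>
          Real.log (tsneg n s y))
          = fun x => (InnerProductSpace.toDual ℝ
              (EuclideanSpace ℝ (Fin n × Fin s))).symm (tsneG n s x) := by
        funext x
        show (InnerProductSpace.toDual ℝ _).symm (fderiv ℝ _ x) = _
        rw [(hasFDerivAt_f n s hn x).fderiv]
      rw [hgrad]
      have hlip := ((InnerProductSpace.toDual ℝ
          (EuclideanSpace ℝ (Fin n × Fin s))).symm.lipschitz.comp
        (tsneG_lipschitz n s hn _ hC))
      rw [one_mul] at hlip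
      exact hlip
end
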